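/- A concrete category whose forgetful functor creates all limits and coequalizers of absolute pairs (a Beck category) and which admits a pointwise codensity monad is monadic: it is equivalent (concretely isomorphic) to the Eilenberg–Moore category of its codensity monad. -/

import Mathlib

open CategoryTheory CategoryTheory.Limits

universe v u

/-- A Beck category (a concrete category whose faithful forgetful functor creates all limits
and coequalizers of absolute (split) pairs) admitting a pointwise codensity monad is monadic. -/
theorem stmt6 {A : Type u} [Category.{v} A] {C : Type u} [Category.{v} C]
    (U : A ⥤ C) [U.Faithful]
    [CreatesLimitsOfSize.{v, max u v} U]
    (hBeck : ∀ {X Y : A} (f g : X ⟶ Y), HasSplitCoequalizer (U.map f) (U.map g) →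
      Nonempty (CreatesColimit (parallelPair f g) U))
    [Functor.HasPointwiseRightKanExtension U U] :
    Nonempty (MonadicRightAdjoint U) := by
  -- Step 1: each structured arrow category `c / U` has an initial object.
  have hInit : ∀ c : C, HasInitial (StructuredArrow c U) := by
    intro c
    haveI hC : HasLimit (StructuredArrow.proj c U ⋙ U) :=
      (inferInstance : Functor.HasPointwiseRightKanExtensionAt U U c)
    haveI hA : HasLimit (StructuredArrow.proj c U) :=
      hasLimit_of_created (StructuredArrow.proj c U) U
    let hP : IsLimit (U.mapCone (limit.cone (StructuredArrow.proj c U))) :=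
      isLimitOfPreserves U (limit.isLimit _)
    -- the cone over `proj ⋙ U` with vertex `c` given by the structure maps
    let s : Cone (StructuredArrow.proj c U ⋙ U) :=
      { pt := c
        π := { app := fun e => e.hom
               naturality := fun e e' g => by
                 exact (Category.id_comp _).trans (StructuredArrow.w g).symm } }
    let L : A := limit (StructuredArrow.proj c U)
    let f₀ : c ⟶ U.obj L := hP.lift s
    have hf₀ : ∀ e : StructuredArrow c U,
        f₀ ≫ U.map (limit.π (StructuredArrow.proj c U) e) = e.hom := fun e => hP.fac s e
    -- candidate initial object
    let I₀ : StructuredArrow c U := StructuredArrow.mk f₀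
    -- the canonical map from `I₀` to any object
    let toE : ∀ e : StructuredArrow c U, I₀ ⟶ e := fun e =>
      StructuredArrow.homMk (limit.π (StructuredArrow.proj c U) e) (hf₀ e)
    -- the leg at `I₀` is the identity
    have ht : limit.π (StructuredArrow.proj c U) I₀ = 𝟙 L := by
      apply limit.hom_ext
      intro j
      rw [Category.id_comp]
      exact limit.w (StructuredArrow.proj c U) (toE j)
    have huniq : ∀ (e : StructuredArrow c U) (m : I₀ ⟶ e), m = toE e := by
      intro e m
      have := limit.w (StructuredArrow.proj c U) m
      rw [ht] at this
      ext
      exact (Category.id_comp _).symm.trans this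
    haveI : ∀ e : StructuredArrow c U, Unique (I₀ ⟶ e) := fun e =>
      { default := toE e
        uniq := fun m => huniq e m }
    exact hasInitial_of_unique I₀
  haveI := hInit
  -- Step 2: `U` is a right adjoint.
  haveI : U.IsRightAdjoint := isRightAdjointOfStructuredArrowInitials U
  -- Step 3: `U` creates coequalizers of `U`-split pairs.
  haveI : Monad.CreatesColimitOfIsSplitPair U :=
    ⟨fun f g _ => (hBeck f g ‹_›).some⟩
  exact ⟨Monad.monadicOfCreatesGSplitCoequalizers (Adjunction.ofIsRightAdjoint U)⟩
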